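/- Let $A$ be an EW tournament matrix of order $4t+1$ with parameter $a$, and let $p$ be a prime dividing $t$. Then the rank of $A + I$ over $\mathbb{F}_p$ is at least $2t+1$. -/
import Mathlib

set_option maxHeartbeats 1000000


open Matrix

/-- The all-ones matrix. -/
def allOnes {R : Type*} [One R] {m n : Type*} : Matrix m n R :=
  Matrix.of fun _ _ => 1

section Aux

variable {K : Type*} [Field K] {I : Type*} [Fintype I] [DecidableEq I]

lemma allOnes_mulVec (x : I → K) :
    (allOnes : Matrix I I K) *ᵥ x = fun _ => ∑ j, x j := by
  funext i
  simp [allOnes, mulVec, dotProduct]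

lemma ker_one_add_allOnes_le :
    LinearMap.ker ((1 : Matrix I I K) + allOnes).mulVecLin ≤
      Submodule.span K {(fun _ => 1 : I → K)} := by
  intro x hx
  rw [LinearMap.mem_ker, Matrix.mulVecLin_apply, add_mulVec, one_mulVec,
    allOnes_mulVec] at hx
  have hx' : ∀ i, x i + ∑ j, x j = 0 := fun i => congrFun hx i
  rw [Submodule.mem_span_singleton]
  refine ⟨-∑ j, x j, ?_⟩
  funext i
  have hthis := hx' i
  simp only [Pi.smul_apply, smul_eq_mul, mul_one]
  linear_combination -hthis

lemma finrank_ker_one_add_allOnes_le [Nonempty I] :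
    Module.finrank K (LinearMap.ker ((1 : Matrix I I K) + allOnes).mulVecLin) ≤ 1 := by
  have h1 : (fun _ => 1 : I → K) ≠ 0 := by
    intro h
    have := congrFun h (Classical.arbitrary I)
    simp at this
  have h2 := Submodule.finrank_mono (M := I → K)
    (ker_one_add_allOnes_le (K := K) (I := I))
  have h3 := finrank_span_singleton (K := K) h1
  rw [h3] at h2
  exact h2

lemma rank_one_add_allOnes_ge [Nonempty I] :
    Fintype.card I ≤ ((1 : Matrix I I K) + allOnes).rank + 1 := by
  have h := LinearMap.finrank_range_add_finrank_ker
    ((1 : Matrix I I K) + allOnes).mulVecLin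
  rw [Module.finrank_fintype_fun_eq_card] at h
  have h2 := finrank_ker_one_add_allOnes_le (K := K) (I := I)
  have : ((1 : Matrix I I K) + allOnes).rank =
      Module.finrank K (LinearMap.range ((1 : Matrix I I K) + allOnes).mulVecLin) := rfl
  omega

lemma rank_one_add_allOnes_eq (h2 : (1 + (Fintype.card I : K)) ≠ 0) :
    ((1 : Matrix I I K) + allOnes).rank = Fintype.card I := by
  have hker : LinearMap.ker ((1 : Matrix I I K) + allOnes).mulVecLin = ⊥ := by
    rw [Submodule.eq_bot_iff]
    intro x hx
    have hmem := ker_one_add_allOnes_le hx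
    rw [LinearMap.mem_ker, Matrix.mulVecLin_apply, add_mulVec, one_mulVec,
      allOnes_mulVec] at hx
    rw [Submodule.mem_span_singleton] at hmem
    obtain ⟨c, hc⟩ := hmem
    have hxi : ∀ i, x i = c := by
      intro i
      rw [← hc]; simp
    have hsum : ∀ i, x i + ∑ j, x j = 0 := fun i => congrFun hx i
    funext i
    have h1 := hsum i
    rw [hxi i] at h1
    have h2s : ∑ j, x j = (Fintype.card I : K) * c := by
      rw [Finset.sum_congr rfl (fun j _ => hxi j)]
      simp [Finset.sum_const, mul_comm]
    rw [h2s] at h1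
    have hc0 : c = 0 := by
      have hh : c * (1 + (Fintype.card I : K)) = 0 := by linear_combination h1
      rcases mul_eq_zero.mp hh with h | h
      · exact h
      · exact absurd h h2
    simp [hxi i, hc0]
  have h := LinearMap.finrank_range_add_finrank_ker
    ((1 : Matrix I I K) + allOnes).mulVecLin
  rw [Module.finrank_fintype_fun_eq_card, hker, finrank_bot, add_zero] at h
  exact h

end Aux

lemma two_zmod_two : (2 : ZMod 2) = 0 := by decide

abbrev EWIdx (t a : ℕ) := (Fin t ⊕ Fin t) ⊕ (Fin a ⊕ Fin (2 * t + 1 - a))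

theorem ew_tournament_rank_lower_bound (t a p : ℕ) (ht : 1 ≤ t) (ha : a ≤ 2 * t + 1)
    (hp : p.Prime) (hpt : p ∣ t)
    (A : Matrix ((Fin t ⊕ Fin t) ⊕ (Fin a ⊕ Fin (2 * t + 1 - a)))
                ((Fin t ⊕ Fin t) ⊕ (Fin a ⊕ Fin (2 * t + 1 - a))) ℤ)
    (h01 : ∀ i j, A i j = 0 ∨ A i j = 1)
    (htour : A + Aᵀ = allOnes - 1)
    (hAAt : (A + 1) * (Aᵀ + 1) = (t : ℤ) • (1 + allOnes) +
      Matrix.fromBlocks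
        (Matrix.fromBlocks 0 0 0 (2 • allOnes))
        (Matrix.fromBlocks 0 0 allOnes allOnes)
        (Matrix.fromBlocks 0 allOnes 0 allOnes)
        (Matrix.fromBlocks allOnes 0 0 allOnes))
    (hAtA : (Aᵀ + 1) * (A + 1) = (t : ℤ) • (1 + allOnes) +
      Matrix.fromBlocks
        (Matrix.fromBlocks (2 • allOnes) 0 0 0)
        (Matrix.fromBlocks allOnes allOnes 0 0)
        (Matrix.fromBlocks allOnes 0 allOnes 0)
        (Matrix.fromBlocks (2 • allOnes) allOnes allOnes 0)) :
    2 * t + 1 ≤ ((A + 1).map (Int.cast : ℤ → ZMod p)).rank := by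
  haveI : Fact p.Prime := ⟨hp⟩
  haveI : Nonempty (EWIdx t a) := ⟨Sum.inl (Sum.inl ⟨0, ht⟩)⟩
  have hcardI : Fintype.card (EWIdx t a) = 4 * t + 1 := by
    simp only [EWIdx, Fintype.card_sum, Fintype.card_fin]
    omega
  set f : ℤ →+* ZMod p := Int.castRingHom (ZMod p) with hf
  have hfc : (Int.cast : ℤ → ZMod p) = ⇑f := rfl
  rw [hfc]
  set B : Matrix (EWIdx t a) (EWIdx t a) (ZMod p) := (A + 1).map ⇑f with hB
  have htK : ((t : ℕ) : ZMod p) = 0 := (ZMod.natCast_eq_zero_iff t p).mpr hpt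
  have hmapsmul : ∀ X : Matrix (EWIdx t a) (EWIdx t a) ℤ, ((t : ℤ) • X).map ⇑f = 0 := by
    intro X
    ext i j
    simp only [Matrix.map_apply, Matrix.smul_apply, smul_eq_mul, Matrix.zero_apply]
    rw [_root_.map_mul f, map_natCast f, htK, zero_mul]
  have hmapadd : ∀ X Y : Matrix (EWIdx t a) (EWIdx t a) ℤ, (X + Y).map ⇑f = X.map ⇑f + Y.map ⇑f :=
    fun X Y => Matrix.map_add ⇑f (fun x y => map_add f x y) X Y
  have hBt : Bᵀ = (Aᵀ + 1).map ⇑f := by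
    rw [hB, ← Matrix.transpose_map, transpose_add, transpose_one]
  -- B * Bᵀ = M.map f
  have hBBt : B * Bᵀ = (Matrix.fromBlocks
        (Matrix.fromBlocks 0 0 0 (2 • allOnes))
        (Matrix.fromBlocks 0 0 allOnes allOnes)
        (Matrix.fromBlocks 0 allOnes 0 allOnes)
        (Matrix.fromBlocks allOnes 0 0 allOnes) : Matrix (EWIdx t a) (EWIdx t a) ℤ).map ⇑f := by
    rw [hBt, hB, ← Matrix.map_mul, hAAt, hmapadd, hmapsmul, zero_add]
  have hBtB : Bᵀ * B = (Matrix.fromBlocks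
        (Matrix.fromBlocks (2 • allOnes) 0 0 0)
        (Matrix.fromBlocks allOnes allOnes 0 0)
        (Matrix.fromBlocks allOnes 0 allOnes 0)
        (Matrix.fromBlocks (2 • allOnes) allOnes allOnes 0) : Matrix (EWIdx t a) (EWIdx t a) ℤ).map ⇑f := by
    rw [hBt, hB, ← Matrix.map_mul, hAtA, hmapadd, hmapsmul, zero_add]
  -- B + Bᵀ = 1 + allOnes
  have hsumZ : (A + 1) + (Aᵀ + 1) = (1 : Matrix (EWIdx t a) (EWIdx t a) ℤ) + allOnes := by
    ext i j
    have h := Matrix.ext_iff.mpr htour i j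
    simp only [Matrix.add_apply, Matrix.sub_apply] at h ⊢
    linarith
  have hsum : B + Bᵀ = (1 : Matrix (EWIdx t a) (EWIdx t a) (ZMod p)) + allOnes := by
    rw [hBt, hB, ← hmapadd, hsumZ, hmapadd, Matrix.map_one ⇑f (map_zero f) (map_one f)]
    congr 1
    ext i j
    simp [allOnes, Matrix.map_apply]
  -- submodules
  set U := LinearMap.range B.mulVecLin with hU
  set W := LinearMap.range Bᵀ.mulVecLin with hW
  have hrangesum : LinearMap.range ((1 : Matrix (EWIdx t a) (EWIdx t a) (ZMod p)) + allOnes).mulVecLin ≤ U ⊔ W := by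
    rw [← hsum, Matrix.mulVecLin_add]
    rintro y ⟨x, rfl⟩
    exact Submodule.add_mem_sup ⟨x, rfl⟩ ⟨x, rfl⟩
  have hsuple : ((1 : Matrix (EWIdx t a) (EWIdx t a) (ZMod p)) + allOnes).rank ≤
      Module.finrank (ZMod p) ↥(U ⊔ W) :=
    Submodule.finrank_mono hrangesum
  have hsupinf := Submodule.finrank_sup_add_finrank_inf_eq U W
  have hWU : Module.finrank (ZMod p) ↥W = B.rank := Matrix.rank_transpose B
  have hUB : Module.finrank (ZMod p) ↥U = B.rank := rfl
  rcases hp.eq_two_or_odd' with hp2 | hodd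
  · -- p = 2
    subst hp2
    have hrank1 : Fintype.card (EWIdx t a) ≤ ((1 : Matrix (EWIdx t a) (EWIdx t a) (ZMod 2)) + allOnes).rank + 1 :=
      rank_one_add_allOnes_ge
    -- the common vector v
    set c1 : (EWIdx t a) := Sum.inl (Sum.inl ⟨0, ht⟩) with hc1
    set c2 : (EWIdx t a) := Sum.inl (Sum.inr ⟨0, ht⟩) with hc2
    set v : (EWIdx t a) → ZMod 2 := Sum.elim (fun _ => 0) (fun _ => 1) with hv
    have hvM : (B * Bᵀ) *ᵥ Pi.single c2 1 = v := by
      rw [hBBt]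
      funext i
      rw [Matrix.mulVec_single]
      rcases i with (i | i) | (i | i) <;>
        simp [hc2, hv, Matrix.map_apply, allOnes, two_zmod_two]
    have hvM' : (Bᵀ * B) *ᵥ (Pi.single c1 1 + Pi.single c2 1) = v := by
      rw [hBtB]
      funext i
      rw [Matrix.mulVec_add]
      simp only [Matrix.mulVec_single, Pi.add_apply]
      rcases i with (i | i) | (i | i) <;>
        simp [hc1, hc2, hv, Matrix.map_apply, allOnes, two_zmod_two]
    have hvU : v ∈ U := by
      refine ⟨Bᵀ *ᵥ Pi.single c2 1, ?_⟩
      rw [Matrix.mulVecLin_apply, Matrix.mulVec_mulVec, hvM]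
    have hvW : v ∈ W := by
      refine ⟨B *ᵥ (Pi.single c1 1 + Pi.single c2 1), ?_⟩
      rw [Matrix.mulVecLin_apply, Matrix.mulVec_mulVec, hvM']
    have hvne : v ≠ 0 := by
      have hne : Nonempty (Fin a ⊕ Fin (2 * t + 1 - a)) := by
        rw [← Fintype.card_pos_iff]
        simp only [Fintype.card_sum, Fintype.card_fin]
        omega
      obtain ⟨i0⟩ := hne
      intro h
      have := congrFun h (Sum.inr i0)
      simp [hv] at this
    have hinf : 1 ≤ Module.finrank (ZMod 2) ↥(U ⊓ W) := by
      rcases Nat.eq_zero_or_pos (Module.finrank (ZMod 2) ↥(U ⊓ W)) with h0 | h1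
      · exfalso
        rw [Submodule.finrank_eq_zero] at h0
        have : v ∈ (⊥ : Submodule (ZMod 2) ((EWIdx t a) → ZMod 2)) := by
          rw [← h0]; exact ⟨hvU, hvW⟩
        exact hvne (Submodule.mem_bot _ |>.mp this)
      · exact h1
    omega
  · -- p odd
    have h2ne : ((2 : ℕ) : ZMod p) ≠ 0 := by
      intro h
      rw [ZMod.natCast_eq_zero_iff] at h
      have := (Nat.prime_dvd_prime_iff_eq hp Nat.prime_two).mp h
      rcases hodd with ⟨k, hk⟩
      omega
    have hcast : (1 + (Fintype.card (EWIdx t a) : ZMod p)) ≠ 0 := by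
      rw [hcardI]
      push_cast
      rw [htK]
      intro h
      apply h2ne
      push_cast
      linear_combination h
    have hrank1 : ((1 : Matrix (EWIdx t a) (EWIdx t a) (ZMod p)) + allOnes).rank = Fintype.card (EWIdx t a) :=
      rank_one_add_allOnes_eq hcast
    omega
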